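/- Let P = {P_k} be a complete family of orthogonal projectors and for a density matrix ρ define the geometric block coherence C_geo(ρ,P) = 1 − max_{σ ∈ I_B} F(ρ,σ)², where F(ρ,σ) = Tr√(√ρ σ √ρ) is the fidelity, and C_Tr(ρ,P) = inf{ ‖ρ − λσ‖_Tr : λ > 0, σ ∈ I_B }. Then C_geo(ρ,P) ≥ (1/4)[C_Tr(ρ,P)]². (The proof uses the Fuchs–van de Graaf inequality 1 − F(ρ,σ)² ≥ (1/4)‖ρ − σ‖_Tr² for density matrices ρ, σ.) -/

import Mathlib

open Matrix
open scoped ComplexOrder Classical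

namespace BlockCoherence

variable {n : Type*} [Fintype n] [DecidableEq n]

/-- Real part of the trace of a complex matrix. -/
noncomputable def retr (A : Matrix n n ℂ) : ℝ := (Matrix.trace A).re

/-- A density matrix: positive semidefinite with trace 1. -/
def IsDensityMatrix (ρ : Matrix n n ℂ) : Prop := ρ.PosSemidef ∧ Matrix.trace ρ = 1

/-- A complete family of orthogonal projectors. -/
def IsProjFamily {K : Type*} [Fintype K] (P : K → Matrix n n ℂ) : Prop :=
  (∀ k, (P k).IsHermitian) ∧ (∀ k, P k * P k = P k) ∧
    (∀ j k, j ≠ k → P j * P k = 0) ∧ (∑ k, P k = 1)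

/-- Block dephasing map Δ(ρ) = Σ_k P_k ρ P_k. -/
noncomputable def deph {K : Type*} [Fintype K] (P : K → Matrix n n ℂ)
    (ρ : Matrix n n ℂ) : Matrix n n ℂ := ∑ k, P k * ρ * P k

/-- Block incoherent (free) states. -/
def IsBlockIncoherent {K : Type*} [Fintype K] (P : K → Matrix n n ℂ)
    (σ : Matrix n n ℂ) : Prop := IsDensityMatrix σ ∧ σ = deph P σ

/-- A block-incoherent operation presented by its Kraus operators. -/
def IsBIOp {K : Type*} [Fintype K] {N : Type*} [Fintype N]
    (P : K → Matrix n n ℂ) (Kr : N → Matrix n n ℂ) : Prop :=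
  (∑ m, (Kr m)ᴴ * Kr m = 1) ∧
    ∀ (m : N) (i j : K), i ≠ j → ∀ σ, IsBlockIncoherent P σ →
      P i * (Kr m * σ * (Kr m)ᴴ) * P j = 0

/-- The channel determined by Kraus operators. -/
noncomputable def krausApply {N : Type*} [Fintype N]
    (Kr : N → Matrix n n ℂ) (ρ : Matrix n n ℂ) : Matrix n n ℂ :=
  ∑ m, Kr m * ρ * (Kr m)ᴴ

/-- A block coherence measure: conditions (B1)-(B4). -/
structure IsBlockCoherenceMeasure {K : Type*} [Fintype K] (P : K → Matrix n n ℂ)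
    (C : Matrix n n ℂ → ℝ) : Prop where
  nonneg : ∀ ρ, IsDensityMatrix ρ → 0 ≤ C ρ
  eq_zero_iff : ∀ ρ, IsDensityMatrix ρ → (C ρ = 0 ↔ IsBlockIncoherent P ρ)
  monotone : ∀ ρ, IsDensityMatrix ρ → ∀ {N : Type} [Fintype N] (Kr : N → Matrix n n ℂ),
    IsBIOp P Kr → C (krausApply Kr ρ) ≤ C ρ
  strong_monotone : ∀ ρ, IsDensityMatrix ρ → ∀ {N : Type} [Fintype N] (Kr : N → Matrix n n ℂ),
    IsBIOp P Kr →
      ∑ m, (if retr (Kr m * ρ * (Kr m)ᴴ) = 0 then (0 : ℝ) else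
        retr (Kr m * ρ * (Kr m)ᴴ) *
          C ((retr (Kr m * ρ * (Kr m)ᴴ))⁻¹ • (Kr m * ρ * (Kr m)ᴴ))) ≤ C ρ
  convex : ∀ {N : Type} [Fintype N] (p : N → ℝ) (ρs : N → Matrix n n ℂ),
    (∀ m, 0 ≤ p m) → ∑ m, p m = 1 → (∀ m, IsDensityMatrix (ρs m)) →
      C (∑ m, p m • ρs m) ≤ ∑ m, p m * C (ρs m)

/-- Real power of a matrix via the spectral functional calculus (0 on non-Hermitian input). -/
noncomputable def mpow (A : Matrix n n ℂ) (t : ℝ) : Matrix n n ℂ :=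
  if hA : A.IsHermitian then
    (hA.eigenvectorUnitary : Matrix n n ℂ) *
      Matrix.diagonal (fun i => ((hA.eigenvalues i ^ t : ℝ) : ℂ)) *
      (star (hA.eigenvectorUnitary : Matrix n n ℂ))
  else 0

/-- Positive semidefinite square root (0 on non-PSD input). -/
noncomputable def msqrt (A : Matrix n n ℂ) : Matrix n n ℂ :=
  if hA : A.PosSemidef then
    (hA.1.eigenvectorUnitary : Matrix n n ℂ) *
      Matrix.diagonal ((↑) ∘ (Real.sqrt ·) ∘ hA.1.eigenvalues) *
      (star hA.1.eigenvectorUnitary : Matrix n n ℂ)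
  else 0

/-- Base-2 matrix logarithm via spectral calculus, with the convention log 0 = 0. -/
noncomputable def mlog2 (A : Matrix n n ℂ) : Matrix n n ℂ :=
  if hA : A.IsHermitian then
    (hA.eigenvectorUnitary : Matrix n n ℂ) *
      Matrix.diagonal (fun i => ((Real.logb 2 (hA.eigenvalues i) : ℝ) : ℂ)) *
      (star (hA.eigenvectorUnitary : Matrix n n ℂ))
  else 0

/-- Trace norm ‖M‖_Tr = Tr √(MᴴM). -/
noncomputable def trNorm (M : Matrix n n ℂ) : ℝ :=
  retr (msqrt (Mᴴ * M))

/-- The α-z Rényi block coherence measure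
`C_{α,z}(ρ,P) = 1 - (max_{σ∈I_B} Tr[(σ^{(1-α)/(2z)} ρ^{α/z} σ^{(1-α)/(2z)})^z])^{1/α}`. -/
noncomputable def Caz {K : Type*} [Fintype K] (α z : ℝ) (P : K → Matrix n n ℂ)
    (ρ : Matrix n n ℂ) : ℝ :=
  1 - (sSup {x : ℝ | ∃ σ, IsBlockIncoherent P σ ∧
    x = retr (mpow (mpow σ ((1 - α) / (2 * z)) * mpow ρ (α / z) *
      mpow σ ((1 - α) / (2 * z))) z)}) ^ (1 / α)


/-- Trace-norm block coherence `C_Tr(ρ,P) = inf { ‖ρ - λσ‖_Tr : λ > 0, σ ∈ I_B }`. -/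
noncomputable def CTr {K : Type*} [Fintype K] (P : K → Matrix n n ℂ)
    (ρ : Matrix n n ℂ) : ℝ :=
  sInf {x : ℝ | ∃ (lam : ℝ) (σ : Matrix n n ℂ), 0 < lam ∧
    IsBlockIncoherent P σ ∧ x = trNorm (ρ - lam • σ)}

/-- Fidelity `F(ρ,σ) = Tr √(√ρ σ √ρ)`. -/
noncomputable def fidelity (ρ σ : Matrix n n ℂ) : ℝ :=
  retr (msqrt (msqrt ρ * σ * msqrt ρ))

/-- Geometric block coherence `C_geo(ρ,P) = 1 - max_{σ∈I_B} F(ρ,σ)²`. -/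
noncomputable def Cgeo {K : Type*} [Fintype K] (P : K → Matrix n n ℂ)
    (ρ : Matrix n n ℂ) : ℝ :=
  1 - sSup {x : ℝ | ∃ σ, IsBlockIncoherent P σ ∧ x = (fidelity ρ σ) ^ 2}


section Helpers

/-! ### Auxiliary lemmas -/

open scoped MatrixOrder in
lemma msqrt_eq_sqrt {A : Matrix n n ℂ} (hA : A.PosSemidef) : msqrt A = CFC.sqrt A := by
  rw [msqrt, dif_pos hA, CFC.sqrt_eq_real_sqrt A hA.nonneg, cfcₙ_eq_cfc, hA.1.cfc_eq, IsHermitian.cfc,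
    Unitary.conjStarAlgAut_apply]
  rfl

open scoped MatrixOrder in
lemma msqrt_posSemidef {A : Matrix n n ℂ} (hA : A.PosSemidef) : (msqrt A).PosSemidef := by
  rw [msqrt_eq_sqrt hA]; exact Matrix.nonneg_iff_posSemidef.mp (CFC.sqrt_nonneg A)

open scoped MatrixOrder in
lemma msqrt_mul_self {A : Matrix n n ℂ} (hA : A.PosSemidef) : msqrt A * msqrt A = A := by
  rw [msqrt_eq_sqrt hA]; exact CFC.sqrt_mul_sqrt_self A hA.nonneg

open scoped MatrixOrder in
lemma msqrt_unique {A B : Matrix n n ℂ} (hB : B.PosSemidef) (h : B * B = A) :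
    msqrt A = B := by
  have hA : A.PosSemidef := h ▸ (by simpa [pow_two] using hB.pow 2)
  rw [msqrt_eq_sqrt hA]
  exact CFC.sqrt_unique h hB.nonneg

lemma retr_psd_nonneg {A : Matrix n n ℂ} (hA : A.PosSemidef) : 0 ≤ retr A := by
  rw [retr, Matrix.trace, Complex.re_sum]
  apply Finset.sum_nonneg
  intro i _
  have h : (0 : ℂ) ≤ A i i := by
    exact hA.diag_nonneg
  exact (Complex.le_def.mp h).1

lemma trNorm_nonneg (M : Matrix n n ℂ) : 0 ≤ trNorm M :=
  retr_psd_nonneg (msqrt_posSemidef (Matrix.posSemidef_conjTranspose_mul_self M))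

lemma retr_unitary_diag (V : Matrix n n ℂ) (hV : star V * V = 1) (f : n → ℝ) :
    retr (V * Matrix.diagonal (fun i => (f i : ℂ)) * star V) = ∑ i, f i := by
  rw [retr, Matrix.trace_mul_cycle, hV, Matrix.one_mul, Matrix.trace_diagonal]
  simp

lemma conj_diag_mul (V : Matrix n n ℂ) (hV : star V * V = 1) (d e : n → ℂ) :
    (V * Matrix.diagonal d * star V) * (V * Matrix.diagonal e * star V)
      = V * Matrix.diagonal (fun i => d i * e i) * star V := by
  have h1 : Matrix.diagonal d * (star V * V) * Matrix.diagonal e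
      = Matrix.diagonal fun i => d i * e i := by
    rw [hV, Matrix.mul_one, Matrix.diagonal_mul_diagonal]
  calc (V * Matrix.diagonal d * star V) * (V * Matrix.diagonal e * star V)
      = V * (Matrix.diagonal d * (star V * V) * Matrix.diagonal e) * star V := by
        simp only [Matrix.mul_assoc]
    _ = V * Matrix.diagonal (fun i => d i * e i) * star V := by rw [h1]

lemma psd_conj_diag (V : Matrix n n ℂ) (f : n → ℝ) (hf : ∀ i, 0 ≤ f i) :
    (V * Matrix.diagonal (fun i => (f i : ℂ)) * star V).PosSemidef := by
  have hd : (Matrix.diagonal (fun i => (f i : ℂ))).PosSemidef :=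
    Matrix.posSemidef_diagonal_iff.mpr fun i => by
      simpa using Complex.zero_le_real.mpr (hf i)
  simpa [Matrix.star_eq_conjTranspose] using hd.mul_mul_conjTranspose_same V

lemma retr_conjTranspose_mul_self' (X : Matrix n n ℂ) :
    retr (Xᴴ * X) = ∑ p : n × n, ‖X p.1 p.2‖ ^ 2 := by
  simp only [retr, Matrix.trace, Matrix.diag, Matrix.mul_apply, conjTranspose_apply,
    Fintype.sum_prod_type]
  rw [Complex.re_sum, Finset.sum_comm]
  congr 1; ext i; rw [Complex.re_sum]; congr 1; ext j
  have h1 : (star (X j i) * X j i) = ((Complex.normSq (X j i) : ℝ) : ℂ) := by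
    rw [Complex.star_def, Complex.normSq_eq_conj_mul_self]
  rw [h1, Complex.ofReal_re, Complex.normSq_eq_norm_sq]

/-- Cauchy–Schwarz for the Frobenius inner product. -/
lemma trace_CS (X Y : Matrix n n ℂ) :
    ‖Matrix.trace (Xᴴ * Y)‖ ≤ Real.sqrt (retr (Xᴴ * X)) * Real.sqrt (retr (Yᴴ * Y)) := by
  classical
  let v : Matrix n n ℂ → EuclideanSpace ℂ (n × n) := fun M => WithLp.toLp 2 (fun p : n × n => M p.1 p.2)
  have hinner : ∀ A B : Matrix n n ℂ, inner ℂ (v A) (v B) = Matrix.trace (Aᴴ * B) := by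
    intro A B
    simp only [PiLp.inner_apply, RCLike.inner_apply', Matrix.trace, Matrix.diag,
      Matrix.mul_apply, conjTranspose_apply, Fintype.sum_prod_type, v]
    rw [Finset.sum_comm]
    rfl
  have hnorm : ∀ A : Matrix n n ℂ, ‖v A‖ = Real.sqrt (retr (Aᴴ * A)) := by
    intro A
    rw [EuclideanSpace.norm_eq, retr_conjTranspose_mul_self']
  rw [← hinner, ← hnorm, ← hnorm]
  exact norm_inner_le_norm (v X) (v Y)

/-- The trace norm of a Hermitian matrix is attained by tracing against a sign unitary. -/
lemma exists_sign_unitary {H : Matrix n n ℂ} (hH : H.IsHermitian) :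
    ∃ W : Matrix n n ℂ, Wᴴ * W = 1 ∧ trNorm H = (Matrix.trace (H * W)).re := by
  set V : Matrix n n ℂ := (hH.eigenvectorUnitary : Matrix n n ℂ) with hVdef
  have hV1 : star V * V = 1 := Matrix.mem_unitaryGroup_iff'.mp hH.eigenvectorUnitary.2
  have hV2 : V * star V = 1 := Matrix.mem_unitaryGroup_iff.mp hH.eigenvectorUnitary.2
  set lam := hH.eigenvalues with hlam
  set s : n → ℝ := fun i => if 0 ≤ lam i then 1 else -1 with hs
  refine ⟨V * Matrix.diagonal (fun i => (s i : ℂ)) * star V, ?_, ?_⟩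
  · have hstar : star (fun i => ((s i : ℝ) : ℂ)) = fun i => ((s i : ℝ) : ℂ) := by
      funext i
      simp [Pi.star_apply, Complex.star_def, Complex.conj_ofReal]
    have hct : (V * Matrix.diagonal (fun i => (s i : ℂ)) * star V)ᴴ
        = V * Matrix.diagonal (fun i => (s i : ℂ)) * star V := by
      rw [Matrix.star_eq_conjTranspose V, conjTranspose_mul, conjTranspose_mul,
        conjTranspose_conjTranspose, Matrix.diagonal_conjTranspose, hstar,
        Matrix.mul_assoc]
    rw [hct, conj_diag_mul V hV1]
    have h2 : (fun i => ((s i : ℂ)) * (s i : ℂ)) = fun _ => (1 : ℂ) := by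
      funext i
      have h1 : s i * s i = 1 := by by_cases h : 0 ≤ lam i <;> simp [hs, h]
      rw [← Complex.ofReal_mul, h1, Complex.ofReal_one]
    rw [h2, Matrix.diagonal_one, Matrix.mul_one, hV2]
  · have hspec : H = V * Matrix.diagonal (fun i => ((lam i : ℝ) : ℂ)) * star V := by
      simpa [Function.comp_def] using hH.spectral_theorem
    have hHW : H * (V * Matrix.diagonal (fun i => (s i : ℂ)) * star V)
        = V * Matrix.diagonal (fun i => ((lam i * s i : ℝ) : ℂ)) * star V := by
      rw [hspec, conj_diag_mul V hV1]
      push_cast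
      rfl
    have hHH : Hᴴ * H = V * Matrix.diagonal (fun i => ((lam i * lam i : ℝ) : ℂ)) * star V := by
      rw [hH.eq, hspec, conj_diag_mul V hV1]
      push_cast
      rfl
    have habs : msqrt (Hᴴ * H) = V * Matrix.diagonal (fun i => ((|lam i| : ℝ) : ℂ)) * star V := by
      apply msqrt_unique (psd_conj_diag V _ (fun i => abs_nonneg _))
      rw [conj_diag_mul V hV1, hHH]
      have h3 : (fun i => ((|lam i| : ℝ) : ℂ) * ((|lam i| : ℝ) : ℂ))
          = fun i => ((lam i * lam i : ℝ) : ℂ) := by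
        funext i; rw [← Complex.ofReal_mul, abs_mul_abs_self]
      rw [h3]
    rw [trNorm, habs, retr_unitary_diag V hV1, hHW, ← retr, retr_unitary_diag V hV1]
    congr 1
    funext i
    by_cases h : 0 ≤ lam i
    · simp [hs, h, abs_of_nonneg h]
    · simp only [hs, if_neg h, mul_neg, mul_one]
      rw [abs_of_neg (not_le.mp h)]

/-- Polar-type lemma: there is a unitary `U` with `Re Tr(Uᴴ M) = ‖M‖_Tr`. -/
lemma exists_polar_unitary (M : Matrix n n ℂ) :
    ∃ U : Matrix n n ℂ, star U * U = 1 ∧ U * star U = 1 ∧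
      (Matrix.trace (Uᴴ * M)).re = trNorm M := by
  have hA : (Mᴴ * M).PosSemidef := Matrix.posSemidef_conjTranspose_mul_self M
  have hH : (Mᴴ * M).IsHermitian := hA.1
  set V : Matrix n n ℂ := (hH.eigenvectorUnitary : Matrix n n ℂ) with hVdef
  have hV1 : star V * V = 1 := Matrix.mem_unitaryGroup_iff'.mp hH.eigenvectorUnitary.2
  have hV2 : V * star V = 1 := Matrix.mem_unitaryGroup_iff.mp hH.eigenvectorUnitary.2
  set lam := hH.eigenvalues with hlamdef
  have hlam0 : ∀ i, 0 ≤ lam i := hA.eigenvalues_nonneg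
  have hspec : Mᴴ * M = V * Matrix.diagonal (fun i => ((lam i : ℝ) : ℂ)) * star V := by
    simpa [Function.comp_def] using hH.spectral_theorem
  have htrN : trNorm M = ∑ i, Real.sqrt (lam i) := by
    have hmsq : msqrt (Mᴴ * M)
        = V * Matrix.diagonal (fun i => ((Real.sqrt (lam i) : ℝ) : ℂ)) * star V := by
      apply msqrt_unique (psd_conj_diag V _ (fun i => Real.sqrt_nonneg _))
      rw [conj_diag_mul V hV1, hspec]
      have h4 : (fun i => ((Real.sqrt (lam i) : ℝ) : ℂ) * ((Real.sqrt (lam i) : ℝ) : ℂ))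
          = fun i => ((lam i : ℝ) : ℂ) := by
        funext i
        rw [← Complex.ofReal_mul, Real.mul_self_sqrt (hlam0 i)]
      rw [h4]
    rw [trNorm, hmsq, retr_unitary_diag V hV1]
  classical
  set v : n → EuclideanSpace ℂ n := fun i => WithLp.toLp 2 (fun j => V j i) with hvdef
  set w : n → EuclideanSpace ℂ n := fun i => WithLp.toLp 2 (fun k => (M * V) k i) with hwdef
  have hdiagVAV : star V * (Mᴴ * M) * V = Matrix.diagonal (fun i => ((lam i : ℝ) : ℂ)) := by
    rw [hspec]
    calc star V * (V * Matrix.diagonal (fun i => ((lam i : ℝ) : ℂ)) * star V) * V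
        = (star V * V) * Matrix.diagonal (fun i => ((lam i : ℝ) : ℂ)) * (star V * V) := by
          simp only [Matrix.mul_assoc]
      _ = _ := by rw [hV1, Matrix.one_mul, Matrix.mul_one]
  have hww : ∀ i j, inner ℂ (w i) (w j) = if i = j then ((lam i : ℝ) : ℂ) else 0 := by
    intro i j
    have h1 : inner ℂ (w i) (w j) = ((M * V)ᴴ * (M * V)) i j := by
      simp only [PiLp.inner_apply, RCLike.inner_apply', Matrix.mul_apply,
        Matrix.conjTranspose_apply, hwdef, Complex.star_def, map_sum, _root_.map_mul]
    have h2 : (M * V)ᴴ * (M * V) = star V * (Mᴴ * M) * V := by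
      rw [Matrix.conjTranspose_mul, Matrix.star_eq_conjTranspose]
      simp only [Matrix.mul_assoc]
    rw [h1, h2, hdiagVAV, Matrix.diagonal_apply]
  set s : Set n := {i | lam i ≠ 0} with hsdef
  set u : n → EuclideanSpace ℂ n :=
    fun i => ((((Real.sqrt (lam i))⁻¹ : ℝ) : ℂ)) • w i with hudef
  have hsqrt_pos : ∀ i, lam i ≠ 0 → 0 < Real.sqrt (lam i) := fun i hi =>
    Real.sqrt_pos.mpr (lt_of_le_of_ne (hlam0 i) (Ne.symm hi))
  have hkey : ∀ i, lam i ≠ 0 → (Real.sqrt (lam i))⁻¹ * lam i = Real.sqrt (lam i) := by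
    intro i hi
    rw [inv_mul_eq_div, Real.div_sqrt]
  have hu : Orthonormal ℂ (s.restrict u) := by
    rw [orthonormal_iff_ite]
    rintro ⟨i, hi⟩ ⟨j, hj⟩
    simp only [Set.restrict_apply, Set.restrict, hudef]
    rw [inner_smul_left, inner_smul_right, hww i j, Complex.conj_ofReal]
    by_cases h : i = j
    · subst h
      rw [if_pos rfl, if_pos rfl]
      rw [← Complex.ofReal_mul, hkey i hi]
      rw [← Complex.ofReal_mul, inv_mul_cancel₀ (ne_of_gt (hsqrt_pos i hi)),
        Complex.ofReal_one]
    · rw [if_neg h, if_neg (fun hc => h (Subtype.mk_eq_mk.mp hc))]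
      ring
  have hcard : Module.finrank ℂ (EuclideanSpace ℂ n) = Fintype.card n :=
    finrank_euclideanSpace
  obtain ⟨b, hb⟩ := hu.exists_orthonormalBasis_extension_of_card_eq hcard
  set B : Matrix n n ℂ := Matrix.of (fun j i => b i j) with hBdef
  have hB1 : star B * B = 1 := by
    ext i j
    have hbo := orthonormal_iff_ite.mp b.orthonormal i j
    simp only [PiLp.inner_apply, RCLike.inner_apply'] at hbo
    simp only [Matrix.mul_apply, Matrix.star_apply, Matrix.one_apply, hBdef,
      Matrix.of_apply, Complex.star_def]
    exact hbo
  have hB2 : B * star B = 1 := mul_eq_one_comm.mp hB1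
  refine ⟨B * star V, ?_, ?_, ?_⟩
  · rw [Matrix.star_mul, star_star]
    calc V * star B * (B * star V) = V * (star B * B) * star V := by
          simp only [Matrix.mul_assoc]
      _ = 1 := by rw [hB1, Matrix.mul_one, hV2]
  · rw [Matrix.star_mul, star_star]
    calc B * star V * (V * star B) = B * (star V * V) * star B := by
          simp only [Matrix.mul_assoc]
      _ = 1 := by rw [hV1, Matrix.mul_one, hB2]
  · have hUH : (B * star V)ᴴ = V * star B := by
      rw [← Matrix.star_eq_conjTranspose, Matrix.star_mul, star_star]
    rw [hUH]
    have hcyc : Matrix.trace (V * star B * M) = Matrix.trace (star B * (M * V)) := by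
      rw [Matrix.trace_mul_cycle, Matrix.trace_mul_comm]
    have hdiag : ∀ i, (star B * (M * V)) i i = inner ℂ (b i) (w i) := by
      intro i
      simp only [Matrix.mul_apply, Matrix.star_apply, PiLp.inner_apply,
        RCLike.inner_apply', hBdef, hwdef, Matrix.of_apply, Complex.star_def]
    have hbw : ∀ i, inner ℂ (b i) (w i) = ((Real.sqrt (lam i) : ℝ) : ℂ) := by
      intro i
      by_cases hi : lam i = 0
      · have h0 : inner ℂ (w i) (w i) = 0 := by rw [hww i i]; simp [hi]
        have hw0 : w i = 0 := inner_self_eq_zero.mp h0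
        rw [hw0, inner_zero_right, hi, Real.sqrt_zero, Complex.ofReal_zero]
      · have hbi : b i = u i := hb i hi
        rw [hbi, hudef]
        rw [inner_smul_left, hww i i, if_pos rfl, Complex.conj_ofReal,
          ← Complex.ofReal_mul, hkey i hi]
    rw [hcyc, Matrix.trace]
    have h5 : ∑ i, (star B * (M * V)).diag i = ∑ i, ((Real.sqrt (lam i) : ℝ) : ℂ) := by
      apply Finset.sum_congr rfl
      intro i _
      rw [Matrix.diag_apply, hdiag i, hbw i]
    rw [h5, htrN, Complex.re_sum]
    simp

lemma fidelity_eq_trNorm {ρ σ : Matrix n n ℂ} (hρ : ρ.PosSemidef) (hσ : σ.PosSemidef) :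
    fidelity ρ σ = trNorm (msqrt σ * msqrt ρ) := by
  have hρh : (msqrt ρ)ᴴ = msqrt ρ := (msqrt_posSemidef hρ).1
  have hσh : (msqrt σ)ᴴ = msqrt σ := (msqrt_posSemidef hσ).1
  have harg : (msqrt σ * msqrt ρ)ᴴ * (msqrt σ * msqrt ρ) = msqrt ρ * σ * msqrt ρ := by
    rw [conjTranspose_mul, hρh, hσh]
    calc msqrt ρ * msqrt σ * (msqrt σ * msqrt ρ)
        = msqrt ρ * (msqrt σ * msqrt σ) * msqrt ρ := by simp only [Matrix.mul_assoc]
      _ = msqrt ρ * σ * msqrt ρ := by rw [msqrt_mul_self hσ]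
  rw [fidelity, trNorm, harg]

/-- The Fuchs–van de Graaf inequality (upper bound form):
`‖ρ - σ‖_Tr² ≤ 4(1 - F(ρ,σ)²)`. -/
lemma fvdg {ρ σ : Matrix n n ℂ} (hρ : IsDensityMatrix ρ) (hσ : IsDensityMatrix σ) :
    trNorm (ρ - σ) ^ 2 ≤ 4 - 4 * fidelity ρ σ ^ 2 := by
  obtain ⟨hρp, hρt⟩ := hρ
  obtain ⟨hσp, hσt⟩ := hσ
  set C := msqrt ρ with hCdef
  have hCh : Cᴴ = C := (msqrt_posSemidef hρp).1
  have hσh : (msqrt σ)ᴴ = msqrt σ := (msqrt_posSemidef hσp).1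
  obtain ⟨U, hU1, hU2, hU3⟩ := exists_polar_unitary (msqrt σ * C)
  have hU1' : Uᴴ * U = 1 := by rw [← Matrix.star_eq_conjTranspose]; exact hU1
  have hU2' : U * Uᴴ = 1 := by rw [← Matrix.star_eq_conjTranspose]; exact hU2
  set D := msqrt σ * U with hDdef
  set F := fidelity ρ σ with hFdef
  set a := Matrix.trace (Dᴴ * C) with hadef
  have hDC : a.re = F := by
    have h1 : Dᴴ * C = Uᴴ * (msqrt σ * C) := by
      rw [hDdef, conjTranspose_mul, hσh, Matrix.mul_assoc]
    rw [hadef, h1, hU3, hFdef, fidelity_eq_trNorm hρp hσp]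
  have hCC : Cᴴ * C = ρ := by rw [hCh]; exact msqrt_mul_self hρp
  have hCCt : C * Cᴴ = ρ := by rw [hCh]; exact msqrt_mul_self hρp
  have hDD : D * Dᴴ = σ := by
    rw [hDdef, conjTranspose_mul, hσh]
    calc msqrt σ * U * (Uᴴ * msqrt σ) = msqrt σ * (U * Uᴴ) * msqrt σ := by
          simp only [Matrix.mul_assoc]
      _ = σ := by rw [hU2', Matrix.mul_one]; exact msqrt_mul_self hσp
  have tCC : Matrix.trace (Cᴴ * C) = 1 := by rw [hCC, hρt]
  have tDD : Matrix.trace (Dᴴ * D) = 1 := by rw [Matrix.trace_mul_comm, hDD, hσt]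
  have hconjtr : Matrix.trace (Cᴴ * D) = star a := by
    rw [hadef, ← Matrix.trace_conjTranspose, conjTranspose_mul, conjTranspose_conjTranspose]
  have hexp_sub : (C - D)ᴴ * (C - D) = Cᴴ * C - Cᴴ * D - Dᴴ * C + Dᴴ * D := by
    rw [conjTranspose_sub]; noncomm_ring
  have hexp_add : (C + D)ᴴ * (C + D) = Cᴴ * C + Cᴴ * D + Dᴴ * C + Dᴴ * D := by
    rw [conjTranspose_add]; noncomm_ring
  set p := retr ((C - D)ᴴ * (C - D)) with hpdef
  set q := retr ((C + D)ᴴ * (C + D)) with hqdef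
  have hp : p = 2 - 2 * F := by
    rw [hpdef, retr, hexp_sub, Matrix.trace_add, Matrix.trace_sub, Matrix.trace_sub,
      tCC, tDD, hconjtr, ← hadef]
    have h6 : ((1 : ℂ) - star a - a + 1).re = 2 - 2 * a.re := by
      simp [Complex.sub_re, Complex.add_re, Complex.conj_re]
      ring
    rw [h6, hDC]
  have hq : q = 2 + 2 * F := by
    rw [hqdef, retr, hexp_add, Matrix.trace_add, Matrix.trace_add, Matrix.trace_add,
      tCC, tDD, hconjtr, ← hadef]
    have h6 : ((1 : ℂ) + star a + a + 1).re = 2 + 2 * a.re := by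
      simp [Complex.add_re, Complex.conj_re]
      ring
    rw [h6, hDC]
  have hp0 : 0 ≤ p := retr_psd_nonneg (Matrix.posSemidef_conjTranspose_mul_self _)
  have hq0 : 0 ≤ q := retr_psd_nonneg (Matrix.posSemidef_conjTranspose_mul_self _)
  have hHerm : (ρ - σ).IsHermitian := hρp.1.sub hσp.1
  obtain ⟨W, hW1, hW2⟩ := exists_sign_unitary hHerm
  have hiden : (C - D) * (C + D)ᴴ + (C + D) * (C - D)ᴴ = (ρ - σ) + (ρ - σ) := by
    rw [conjTranspose_add, conjTranspose_sub, ← hCCt, ← hDD]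
    noncomm_ring
  have htr : Matrix.trace ((C - D) * ((C + D)ᴴ * W))
      + Matrix.trace ((C + D) * ((C - D)ᴴ * W))
      = Matrix.trace ((ρ - σ) * W) + Matrix.trace ((ρ - σ) * W) := by
    have h7 := congrArg (fun X => Matrix.trace (X * W)) hiden
    simpa only [Matrix.add_mul, Matrix.trace_add, Matrix.mul_assoc] using h7
  have hWc : ∀ X : Matrix n n ℂ, (W * X)ᴴ * (W * X) = Xᴴ * X := by
    intro X
    rw [conjTranspose_mul]
    calc Xᴴ * Wᴴ * (W * X) = Xᴴ * (Wᴴ * W) * X := by simp only [Matrix.mul_assoc]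
      _ = Xᴴ * X := by rw [hW1, Matrix.mul_one]
  have ht1 : ‖Matrix.trace ((C - D) * ((C + D)ᴴ * W))‖ ≤ Real.sqrt q * Real.sqrt p := by
    rw [Matrix.trace_mul_comm, Matrix.mul_assoc]
    have h8 := trace_CS (C + D) (W * (C - D))
    rw [hWc] at h8
    exact h8
  have ht2 : ‖Matrix.trace ((C + D) * ((C - D)ᴴ * W))‖ ≤ Real.sqrt p * Real.sqrt q := by
    rw [Matrix.trace_mul_comm, Matrix.mul_assoc]
    have h8 := trace_CS (C - D) (W * (C + D))
    rw [hWc] at h8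
    exact h8
  have hre1 : (Matrix.trace ((C - D) * ((C + D)ᴴ * W))).re
      ≤ Real.sqrt q * Real.sqrt p :=
    le_trans (Complex.re_le_norm _) ht1
  have hre2 : (Matrix.trace ((C + D) * ((C - D)ᴴ * W))).re
      ≤ Real.sqrt p * Real.sqrt q :=
    le_trans (Complex.re_le_norm _) ht2
  have hreT : (Matrix.trace ((ρ - σ) * W)).re + (Matrix.trace ((ρ - σ) * W)).re
      = (Matrix.trace ((C - D) * ((C + D)ᴴ * W))).re
        + (Matrix.trace ((C + D) * ((C - D)ᴴ * W))).re := by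
    have h9 := congrArg Complex.re htr
    simpa [Complex.add_re] using h9.symm
  have hT : trNorm (ρ - σ) ≤ Real.sqrt p * Real.sqrt q := by
    rw [hW2]
    nlinarith [hre1, hre2, hreT]
  have hT2 : trNorm (ρ - σ) ^ 2 ≤ p * q := by
    have h0 : 0 ≤ trNorm (ρ - σ) := trNorm_nonneg _
    calc trNorm (ρ - σ) ^ 2 ≤ (Real.sqrt p * Real.sqrt q) ^ 2 :=
          pow_le_pow_left₀ h0 hT 2
      _ = p * q := by
          rw [mul_pow, Real.sq_sqrt hp0, Real.sq_sqrt hq0]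
  calc trNorm (ρ - σ) ^ 2 ≤ p * q := hT2
    _ = 4 - 4 * F ^ 2 := by rw [hp, hq]; ring

end Helpers

/-- `C_geo(ρ,P) ≥ (1/4)[C_Tr(ρ,P)]²`. -/
theorem Cgeo_ge_CTr_sq
    {K : Type*} [Fintype K]
    (P : K → Matrix n n ℂ) (hP : IsProjFamily P)
    (ρ : Matrix n n ℂ) (hρ : IsDensityMatrix ρ) :
    (1 / 4) * (CTr P ρ) ^ 2 ≤ Cgeo P ρ := by
  by_cases hex : ∃ σ, IsBlockIncoherent P σ
  · obtain ⟨σ₀, hσ₀⟩ := hex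
    have hTlb : ∀ x ∈ {x : ℝ | ∃ (lam : ℝ) (σ : Matrix n n ℂ), 0 < lam ∧
        IsBlockIncoherent P σ ∧ x = trNorm (ρ - lam • σ)}, 0 ≤ x := by
      rintro x ⟨lam, σ, hlam, hσ, rfl⟩
      exact trNorm_nonneg _
    have hCTr0 : 0 ≤ CTr P ρ := Real.sInf_nonneg hTlb
    have hmem : ∀ σ, IsBlockIncoherent P σ → CTr P ρ ≤ trNorm (ρ - σ) := by
      intro σ hσ
      apply csInf_le ⟨0, fun x hx => hTlb x hx⟩
      exact ⟨1, σ, one_pos, hσ, by rw [one_smul]⟩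
    have hboundS : ∀ x ∈ {x : ℝ | ∃ σ, IsBlockIncoherent P σ ∧ x = (fidelity ρ σ) ^ 2},
        x ≤ 1 - (1 / 4) * (CTr P ρ) ^ 2 := by
      rintro x ⟨σ, hσ, rfl⟩
      have h1 := fvdg hρ hσ.1
      have h2 : CTr P ρ ≤ trNorm (ρ - σ) := hmem σ hσ
      have h3 : (CTr P ρ) ^ 2 ≤ trNorm (ρ - σ) ^ 2 := pow_le_pow_left₀ hCTr0 h2 2
      linarith
    have hSne : {x : ℝ | ∃ σ, IsBlockIncoherent P σ ∧ x = (fidelity ρ σ) ^ 2}.Nonempty :=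
      ⟨(fidelity ρ σ₀) ^ 2, σ₀, hσ₀, rfl⟩
    have hsup : sSup {x : ℝ | ∃ σ, IsBlockIncoherent P σ ∧ x = (fidelity ρ σ) ^ 2}
        ≤ 1 - (1 / 4) * (CTr P ρ) ^ 2 := csSup_le hSne hboundS
    rw [Cgeo]
    linarith
  · have hS : {x : ℝ | ∃ σ, IsBlockIncoherent P σ ∧ x = (fidelity ρ σ) ^ 2} = ∅ := by
      ext x
      simp only [Set.mem_setOf_eq, Set.mem_empty_iff_false, iff_false, not_exists]
      intro σ hσ
      exact absurd ⟨σ, hσ.1⟩ hex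
    have hT : {x : ℝ | ∃ (lam : ℝ) (σ : Matrix n n ℂ), 0 < lam ∧
        IsBlockIncoherent P σ ∧ x = trNorm (ρ - lam • σ)} = ∅ := by
      ext x
      simp only [Set.mem_setOf_eq, Set.mem_empty_iff_false, iff_false, not_exists]
      rintro lam σ ⟨hlam, hσ, hx⟩
      exact absurd ⟨σ, hσ⟩ hex
    rw [Cgeo, CTr, hS, hT, Real.sSup_empty, Real.sInf_empty]
    norm_num

end BlockCoherence
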